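/- arXiv:1710.04444 — 6 statements merged into one kernel-verified Lean document; each statement's English description precedes it below -/
import Mathlib

section
/- Let f : T → T' be an injective graded ring homomorphism between connected graded S-rings, and X an S-subbimodule of T. Then R_{f(X)} = f(R_X), where R_Z := ⊕_n (LH(Z) ∩ T^n) is the bimodule of leading homogeneous parts. -/
variable {T : Type*} [Ring T]

/-- Projection onto the degree `n` homogeneous component. -/
noncomputable def projFun (𝒜 : ℕ → AddSubgroup T) [GradedRing 𝒜] (n : ℕ) (x : T) : T :=
  (DirectSum.decompose 𝒜 x n : T)

lemma projFun_add (𝒜 : ℕ → AddSubgroup T) [GradedRing 𝒜] (n : ℕ) (x y : T) :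
    projFun 𝒜 n (x + y) = projFun 𝒜 n x + projFun 𝒜 n y := by
  unfold projFun
  rw [DirectSum.decompose_add, DirectSum.add_apply, AddSubgroup.coe_add]

lemma projFun_neg (𝒜 : ℕ → AddSubgroup T) [GradedRing 𝒜] (n : ℕ) (x : T) :
    projFun 𝒜 n (-x) = - projFun 𝒜 n x := by
  unfold projFun
  rw [DirectSum.decompose_neg, DFinsupp.neg_apply, AddSubgroup.coe_neg]

/-- The `S`-subbimodule `T^{≤ n}` of elements of degree at most `n`. -/
noncomputable def degLE (𝒜 : ℕ → AddSubgroup T) [GradedRing 𝒜] (n : ℕ) : AddSubgroup T where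
  carrier := {x | ∀ m, n < m → projFun 𝒜 m x = 0}
  zero_mem' := by
    intro m hm
    unfold projFun
    rw [DirectSum.decompose_zero, DirectSum.zero_apply, AddSubgroup.coe_zero]
  add_mem' := by
    intro a b ha hb m hm
    rw [projFun_add, ha m hm, hb m hm, add_zero]
  neg_mem' := by
    intro a ha m hm
    rw [projFun_neg, ha m hm, neg_zero]

/-- `y` is the leading homogeneous part of `x`. -/
def IsLH (𝒜 : ℕ → AddSubgroup T) [GradedRing 𝒜] (x y : T) : Prop :=
  (x = 0 ∧ y = 0) ∨
    ∃ m, y = projFun 𝒜 m x ∧ y ≠ 0 ∧ ∀ k, m < k → projFun 𝒜 k x = 0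

/-- `LH(X)`, the set of leading homogeneous parts of elements of `X`. -/
def leadSet (𝒜 : ℕ → AddSubgroup T) [GradedRing 𝒜] (X : Set T) : Set T :=
  {y | ∃ x ∈ X, IsLH 𝒜 x y}

/-- An additive subgroup of `T` which is an `S = T^0`-subbimodule. -/
def IsSubbimodule (𝒜 : ℕ → AddSubgroup T) (X : AddSubgroup T) : Prop :=
  ∀ s ∈ 𝒜 0, ∀ x ∈ X, s * x ∈ X ∧ x * s ∈ X

/-- `T` is strongly graded: `T^{n+1} = T^1 T^n`. -/
def StronglyGraded (𝒜 : ℕ → AddSubgroup T) : Prop :=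
  ∀ n, (𝒜 (n + 1) : Set T) ⊆
    ↑(AddSubgroup.closure {y : T | ∃ a ∈ 𝒜 1, ∃ b ∈ 𝒜 n, y = a * b})

/-- `R_X`, the graded subbimodule generated by the leading homogeneous parts of `X`. -/
noncomputable def leadSub (𝒜 : ℕ → AddSubgroup T) [GradedRing 𝒜] (X : Set T) : AddSubgroup T :=
  AddSubgroup.closure (⋃ n, leadSet 𝒜 X ∩ (𝒜 n : Set T))

lemma proj_comm {T' : Type*} [Ring T'] (𝒜 : ℕ → AddSubgroup T) [GradedRing 𝒜]
    (ℬ : ℕ → AddSubgroup T') [GradedRing ℬ] (f : T →+* T')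
    (hgraded : ∀ n, ∀ x ∈ 𝒜 n, f x ∈ ℬ n) (n : ℕ) (x : T) :
    f (projFun 𝒜 n x) = projFun ℬ n (f x) := by
  induction x using DirectSum.Decomposition.inductionOn 𝒜 with
  | zero => simp [projFun]
  | @homogeneous i m =>
      rcases eq_or_ne i n with rfl | h
      · rw [projFun, DirectSum.decompose_of_mem_same 𝒜 m.2,
          projFun, DirectSum.decompose_of_mem_same ℬ (hgraded i m.1 m.2)]
      · rw [projFun, DirectSum.decompose_of_mem_ne 𝒜 m.2 h, map_zero,
          projFun, DirectSum.decompose_of_mem_ne ℬ (hgraded i m.1 m.2) h]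
  | add a b ha hb => simp only [projFun_add, map_add, ha, hb]

lemma projFun_mem (𝒜 : ℕ → AddSubgroup T) [GradedRing 𝒜] (n : ℕ) (x : T) :
    projFun 𝒜 n x ∈ 𝒜 n := SetLike.coe_mem _

/-- Lemma 1.3 (2): `R_{f(X)} = f(R_X)` for an injective graded morphism `f`. -/
theorem stmt_2 {T' : Type*} [Ring T'] (𝒜 : ℕ → AddSubgroup T) [GradedRing 𝒜]
    (ℬ : ℕ → AddSubgroup T') [GradedRing ℬ]
    (f : T →+* T') (hinj : Function.Injective f)
    (hgraded : ∀ n, ∀ x ∈ 𝒜 n, f x ∈ ℬ n)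
    (X : AddSubgroup T) (hX : IsSubbimodule 𝒜 X) :
    leadSub ℬ (f '' (X : Set T))
      = AddSubgroup.map f.toAddMonoidHom (leadSub 𝒜 (X : Set T)) := by
  have key : ∀ n x, f (projFun 𝒜 n x) = projFun ℬ n (f x) := proj_comm 𝒜 ℬ f hgraded
  have himg : (⋃ n, leadSet ℬ (f '' (X : Set T)) ∩ (ℬ n : Set T'))
      = f '' (⋃ n, leadSet 𝒜 (X : Set T) ∩ (𝒜 n : Set T)) := by
    ext y
    simp only [Set.mem_iUnion, Set.mem_image, Set.mem_inter_iff]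
    constructor
    · rintro ⟨n, ⟨x', ⟨x, hxX, rfl⟩, hLH⟩, hyn⟩
      rcases hLH with ⟨hx0, rfl⟩ | ⟨m, rfl, hy0, htop⟩
      · refine ⟨0, ⟨n, ⟨x, hxX, Or.inl ⟨hinj (by simpa using hx0), rfl⟩⟩, ?_⟩, map_zero f⟩
        exact SetLike.mem_coe.mpr (𝒜 n).zero_mem
      · have hmn : m = n := by
          by_contra h
          exact hy0 ((DirectSum.decompose_of_mem_same ℬ (projFun_mem ℬ m (f x))).symm.trans
            (DirectSum.decompose_of_mem_ne ℬ hyn (Ne.symm h)))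
        subst hmn
        refine ⟨projFun 𝒜 m x, ⟨m, ⟨x, hxX, Or.inr ⟨m, rfl, ?_, ?_⟩⟩,
          SetLike.mem_coe.mpr (projFun_mem 𝒜 m x)⟩, key m x⟩
        · intro h0
          exact hy0 (by rw [← key, h0, map_zero])
        · intro k hk
          apply hinj
          rw [key, htop k hk, map_zero]
    · rintro ⟨y', ⟨n, ⟨x, hxX, hLH⟩, hyn⟩, rfl⟩
      refine ⟨n, ⟨f x, ⟨x, hxX, rfl⟩, ?_⟩, hgraded n _ hyn⟩
      rcases hLH with ⟨rfl, rfl⟩ | ⟨m, rfl, hy0, htop⟩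
      · exact Or.inl ⟨map_zero f, map_zero f⟩
      · refine Or.inr ⟨m, key m x, ?_, fun k hk => by rw [← key, htop k hk, map_zero]⟩
        intro h0
        exact hy0 (hinj (by rw [h0, map_zero]))
  rw [leadSub, leadSub, himg]
  exact (AddMonoidHom.map_closure f.toAddMonoidHom _).symm
end

section
/- Let P' ⊆ P be submodules of T with filtrations F^n P' ⊆ F^n P ⊆ T^{≤n}, where the filtration {F^n P} is jacobian (i.e. F^{n+1}P ∩ T^{≤n} ⊆ F^n P for all n). Then F^n P' = F^n P for all n if and only if p^n(F^n P') = p^n(F^n P) for all n, where p^n is the projection onto T^n. -/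
variable {T : Type*} [Ring T]

lemma projFun_sub' (𝒜 : ℕ → AddSubgroup T) [GradedRing 𝒜] (n : ℕ) (x y : T) :
    projFun 𝒜 n (x - y) = projFun 𝒜 n x - projFun 𝒜 n y := by
  rw [sub_eq_add_neg, projFun_add, projFun_neg, sub_eq_add_neg]

lemma eq_zero_of_projFun' (𝒜 : ℕ → AddSubgroup T) [GradedRing 𝒜] (x : T)
    (h : ∀ m, projFun 𝒜 m x = 0) : x = 0 := by
  classical
  have hx := DirectSum.sum_support_decompose 𝒜 x
  rw [← hx]
  exact Finset.sum_eq_zero fun i _ => h i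

lemma mem_degLE' (𝒜 : ℕ → AddSubgroup T) [GradedRing 𝒜] (n : ℕ) (x : T) :
    x ∈ degLE 𝒜 n ↔ ∀ m, n < m → projFun 𝒜 m x = 0 := Iff.rfl

/-- Lemma 2.6. -/
theorem stmt_9 (𝒜 : ℕ → AddSubgroup T) [GradedRing 𝒜]
    (F F' : ℕ → AddSubgroup T)
    (hbiF : ∀ n, IsSubbimodule 𝒜 (F n)) (hbiF' : ∀ n, IsSubbimodule 𝒜 (F' n))
    (hmonoF : Monotone F) (hmonoF' : Monotone F')
    (hle : ∀ n, F' n ≤ F n) (hdeg : ∀ n, F n ≤ degLE 𝒜 n)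
    (hjac : ∀ n, F (n + 1) ⊓ degLE 𝒜 n ≤ F n) :
    (∀ n, F' n = F n)
      ↔ ∀ n, projFun 𝒜 n '' (F' n : Set T) = projFun 𝒜 n '' (F n : Set T) := by
  constructor
  · intro h n; rw [h n]
  · intro h n
    induction n with
    | zero =>
      refine le_antisymm (hle 0) ?_
      intro x hx
      obtain ⟨x', hx', hx'eq⟩ : projFun 𝒜 0 x ∈ projFun 𝒜 0 '' (F' 0 : Set T) := by
        rw [h 0]; exact ⟨x, hx, rfl⟩
      have hxd := hdeg 0 hx
      have hx'd := hdeg 0 (hle 0 hx')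
      have hz : x - x' = 0 := by
        apply eq_zero_of_projFun' 𝒜
        intro m
        rcases Nat.eq_zero_or_pos m with rfl | hm
        · rw [projFun_sub', hx'eq, sub_self]
        · rw [projFun_sub', (mem_degLE' 𝒜 0 x).1 hxd m hm,
            (mem_degLE' 𝒜 0 x').1 hx'd m hm, sub_self]
      have hxx : x = x' := by
        have := sub_eq_zero.mp hz
        exact this
      rw [hxx]; exact hx'
    | succ n ih =>
      refine le_antisymm (hle _) ?_
      intro x hx
      obtain ⟨x', hx', hx'eq⟩ : projFun 𝒜 (n + 1) x ∈ projFun 𝒜 (n + 1) '' (F' (n + 1) : Set T) := by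
        rw [h (n + 1)]; exact ⟨x, hx, rfl⟩
      have hdiff : x - x' ∈ F (n + 1) := sub_mem hx (hle _ hx')
      have hdlow : x - x' ∈ degLE 𝒜 n := by
        rw [mem_degLE']
        intro m hm
        rcases eq_or_lt_of_le (Nat.succ_le_of_lt hm) with heq | hlt
        · rw [← heq, projFun_sub', hx'eq, sub_self]
        · rw [projFun_sub', (mem_degLE' 𝒜 (n + 1) x).1 (hdeg _ hx) m hlt,
            (mem_degLE' 𝒜 (n + 1) x').1 (hdeg _ (hle _ hx')) m hlt, sub_self]
      have h1 : x - x' ∈ F' n := by rw [ih]; exact hjac n ⟨hdiff, hdlow⟩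
      have h2 : x - x' ∈ F' (n + 1) := hmonoF' (Nat.le_succ n) h1
      have := add_mem h2 hx'
      simpa using this
end

section
/- A graded S-subbimodule R of a connected graded S-ring T generates the graded ideal I if and only if R + Ĩ = I, where Ĩ := I T^1 + T^1 I. -/
variable {T : Type*} [Ring T]

/-- The subgroup `I·T^1 + T^1·I`. -/
noncomputable def tildeI (𝒜 : ℕ → AddSubgroup T) (I : Set T) : AddSubgroup T :=
  AddSubgroup.closure
    ({y : T | ∃ a ∈ I, ∃ b ∈ 𝒜 1, y = a * b} ∪ {y : T | ∃ a ∈ 𝒜 1, ∃ b ∈ I, y = a * b})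

lemma tildeI_subset (𝒜 : ℕ → AddSubgroup T) (I : TwoSidedIdeal T) :
    ∀ z ∈ tildeI 𝒜 (I : Set T), z ∈ I := by
  intro z hz
  refine AddSubgroup.closure_induction ?_ I.zero_mem (fun x y _ _ hx hy => I.add_mem hx hy)
    (fun x _ hx => I.neg_mem hx) hz
  rintro y (⟨a, ha, b, hb, rfl⟩ | ⟨a, ha, b, hb, rfl⟩)
  · exact I.mul_mem_right _ _ ha
  · exact I.mul_mem_left _ _ hb

lemma mul_left_mem_tildeI (𝒜 : ℕ → AddSubgroup T) [GradedRing 𝒜] (hsg : StronglyGraded 𝒜)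
    (I : TwoSidedIdeal T) (k : ℕ) (x : T) (hx : x ∈ I) (a : T) (ha : a ∈ 𝒜 (k + 1)) :
    a * x ∈ tildeI 𝒜 (I : Set T) := by
  have ha' := hsg k ha
  refine AddSubgroup.closure_induction ?_ (by simpa using (tildeI 𝒜 (I : Set T)).zero_mem)
    (fun y z _ _ hy hz => by rw [add_mul]; exact (tildeI 𝒜 (I : Set T)).add_mem hy hz)
    (fun y _ hy => by rw [neg_mul]; exact (tildeI 𝒜 (I : Set T)).neg_mem hy) ha'
  rintro y ⟨c, hc, d, hd, rfl⟩
  rw [mul_assoc]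
  exact AddSubgroup.subset_closure (Or.inr ⟨c, hc, d * x, I.mul_mem_left _ _ hx, rfl⟩)

lemma mul_right_mem_tildeI (𝒜 : ℕ → AddSubgroup T) [GradedRing 𝒜] (hsg : StronglyGraded 𝒜)
    (I : TwoSidedIdeal T) (m : ℕ) (x : T) (hx : x ∈ I) (b : T) (hb : b ∈ 𝒜 (m + 1)) :
    x * b ∈ tildeI 𝒜 (I : Set T) := by
  induction m generalizing x b with
  | zero => exact AddSubgroup.subset_closure (Or.inl ⟨x, hx, b, hb, rfl⟩)
  | succ m ih =>
    have hb' := hsg (m + 1) hb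
    refine AddSubgroup.closure_induction ?_ (by simpa using (tildeI 𝒜 (I : Set T)).zero_mem)
      (fun y z _ _ hy hz => by rw [mul_add]; exact (tildeI 𝒜 (I : Set T)).add_mem hy hz)
      (fun y _ hy => by rw [mul_neg]; exact (tildeI 𝒜 (I : Set T)).neg_mem hy) hb'
    rintro y ⟨c, hc, d, hd, rfl⟩
    rw [← mul_assoc]
    exact ih (x * c) (I.mul_mem_right _ _ hx) d hd

/-- Lemma 2.10. -/
theorem stmt_10 (𝒜 : ℕ → AddSubgroup T) [GradedRing 𝒜] (hsg : StronglyGraded 𝒜)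
    (I : TwoSidedIdeal T) (hIgr : ∀ x ∈ I, ∀ n, projFun 𝒜 n x ∈ I)
    (R : AddSubgroup T) (hRbi : IsSubbimodule 𝒜 R)
    (hRgr : ∀ x ∈ R, ∀ n, projFun 𝒜 n x ∈ R)
    (hRI : (R : Set T) ⊆ (I : Set T)) :
    TwoSidedIdeal.span (R : Set T) = I
      ↔ ((R ⊔ tildeI 𝒜 (I : Set T) : AddSubgroup T) : Set T) = (I : Set T) := by
  classical
  constructor
  · intro h
    apply Set.Subset.antisymm
    · intro x hx
      obtain ⟨r, hr, y, hy, rfl⟩ := AddSubgroup.mem_sup.mp hx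
      exact I.add_mem (hRI hr) (tildeI_subset 𝒜 I y hy)
    · intro x hx
      rw [← h] at hx
      rw [SetLike.mem_coe, TwoSidedIdeal.mem_span_iff_mem_addSubgroup_closure] at hx
      refine AddSubgroup.closure_induction ?_ (AddSubgroup.zero_mem _)
        (fun y z _ _ hy hz => AddSubgroup.add_mem _ hy hz)
        (fun y _ hy => AddSubgroup.neg_mem _ hy) hx
      rintro y ⟨u, ⟨a, -, r, hr, rfl⟩, b, -, rfl⟩
      show a * r * b ∈ ((R ⊔ tildeI 𝒜 (I : Set T) : AddSubgroup T) : Set T)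
      rw [← DirectSum.sum_support_decompose 𝒜 a, ← DirectSum.sum_support_decompose 𝒜 b,
        Finset.sum_mul, Finset.sum_mul]
      refine AddSubgroup.sum_mem _ fun i _ => ?_
      rw [Finset.mul_sum]
      refine AddSubgroup.sum_mem _ fun j _ => ?_
      have hai : (DirectSum.decompose 𝒜 a i : T) ∈ 𝒜 i := SetLike.coe_mem _
      have hbj : (DirectSum.decompose 𝒜 b j : T) ∈ 𝒜 j := SetLike.coe_mem _
      match i, hai with
      | (k+1), hai =>
        rw [mul_assoc]
        exact AddSubgroup.mem_sup_right (mul_left_mem_tildeI 𝒜 hsg I k _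
          (I.mul_mem_right _ _ (hRI hr)) _ hai)
      | 0, hai =>
        have h1 : (DirectSum.decompose 𝒜 a 0 : T) * r ∈ R := (hRbi _ hai r hr).1
        match j, hbj with
        | (m+1), hbj =>
          exact AddSubgroup.mem_sup_right (mul_right_mem_tildeI 𝒜 hsg I m _
            (hRI h1) _ hbj)
        | 0, hbj =>
          exact AddSubgroup.mem_sup_left (hRbi _ hbj _ h1).2
  · intro h
    refine le_antisymm (fun x hx => TwoSidedIdeal.mem_span_iff.mp hx I hRI) fun x hxI => ?_
    have key : ∀ n, ∀ x ∈ I, x ∈ 𝒜 n → x ∈ TwoSidedIdeal.span (R : Set T) := by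
      intro n
      induction n using Nat.strong_induction_on with
      | _ n ih =>
        intro x hxImem hxn
        have hx' : x ∈ (R ⊔ tildeI 𝒜 (I : Set T) : AddSubgroup T) := by
          have : x ∈ ((R ⊔ tildeI 𝒜 (I : Set T) : AddSubgroup T) : Set T) := by
            rw [h]; exact hxImem
          exact this
        obtain ⟨r, hr, y, hy, hxy⟩ := AddSubgroup.mem_sup.mp hx'
        have hproj : x = projFun 𝒜 n r + projFun 𝒜 n y := by
          rw [← projFun_add, hxy]
          exact (DirectSum.decompose_of_mem_same 𝒜 hxn).symm
        rw [hproj]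
        refine TwoSidedIdeal.add_mem _ (TwoSidedIdeal.subset_span (hRgr r hr n)) ?_
        have hz : ∀ z, projFun 𝒜 n z = 0 → z ∈ (tildeI 𝒜 (I : Set T)) →
            projFun 𝒜 n z ∈ TwoSidedIdeal.span (R : Set T) := fun z hz _ => by
          rw [hz]; exact TwoSidedIdeal.zero_mem _
        refine AddSubgroup.closure_induction ?_ ?_ ?_ ?_ hy
        · rintro z (⟨a, ha, b, hb, rfl⟩ | ⟨a, ha, b, hb, rfl⟩)
          · match n, ih with
            | 0, ih =>
              have h0 : projFun 𝒜 0 (a * b) = 0 := by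
                unfold projFun
                exact DirectSum.coe_decompose_mul_of_right_mem_of_not_le (𝒜 := 𝒜) (i := 1) (n := 0) hb (by decide)
              rw [h0]; exact TwoSidedIdeal.zero_mem _
            | (m+1), ih =>
              have h0 : projFun 𝒜 (m + 1) (a * b) = (DirectSum.decompose 𝒜 a m : T) * b := by
                unfold projFun
                have := DirectSum.coe_decompose_mul_of_right_mem_of_le (n := m + 1)
                  (𝒜 := 𝒜) (a := a) hb (by omega)
                simpa using this
              rw [h0]
              exact TwoSidedIdeal.mul_mem_right _ _ _
                (ih m (by omega) _ (hIgr a ha m) (SetLike.coe_mem _))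
          · match n, ih with
            | 0, ih =>
              have h0 : projFun 𝒜 0 (a * b) = 0 := by
                unfold projFun
                exact DirectSum.coe_decompose_mul_of_left_mem_of_not_le (𝒜 := 𝒜) (i := 1) (n := 0) ha (by decide)
              rw [h0]; exact TwoSidedIdeal.zero_mem _
            | (m+1), ih =>
              have h0 : projFun 𝒜 (m + 1) (a * b) = a * (DirectSum.decompose 𝒜 b m : T) := by
                unfold projFun
                have := DirectSum.coe_decompose_mul_of_left_mem_of_le (n := m + 1)
                  (𝒜 := 𝒜) (b := b) ha (by omega)
                simpa using this
              rw [h0]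
              exact TwoSidedIdeal.mul_mem_left _ _ _
                (ih m (by omega) _ (hIgr b hb m) (SetLike.coe_mem _))
        · have h0 : projFun 𝒜 n (0 : T) = 0 := by
            unfold projFun; rw [DirectSum.decompose_zero]; rfl
          rw [h0]; exact TwoSidedIdeal.zero_mem _
        · intro u v _ _ hu hv
          rw [projFun_add]; exact TwoSidedIdeal.add_mem _ hu hv
        · intro u _ hu
          rw [projFun_neg]; exact TwoSidedIdeal.neg_mem _ hu
    rw [← DirectSum.sum_support_decompose 𝒜 x]
    exact sum_mem fun i _ => key i _ (hIgr x hxI i) (SetLike.coe_mem _)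
end

section
/- Let I be a graded ideal in a strongly graded connected S-ring T and let R̃ be a graded S-subbimodule generating I. If there exists a graded S-bimodule complement R of R̃ ∩ Ĩ in R̃ (i.e. R ⊕ (R̃ ∩ Ĩ) = R̃), then R is a bimodule of relations for T/I, i.e., R ⊕ Ĩ = I where Ĩ := I T^1 + T^1 I. -/
variable {T : Type*} [Ring T]

-- generator lemmas
lemma mem_tildeI_left (𝒜 : ℕ → AddSubgroup T) (I : Set T) {a b : T} (ha : a ∈ I) (hb : b ∈ 𝒜 1) :
    a * b ∈ tildeI 𝒜 I :=
  AddSubgroup.subset_closure (Or.inl ⟨a, ha, b, hb, rfl⟩)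

lemma mem_tildeI_right (𝒜 : ℕ → AddSubgroup T) (I : Set T) {a b : T} (ha : a ∈ 𝒜 1) (hb : b ∈ I) :
    a * b ∈ tildeI 𝒜 I :=
  AddSubgroup.subset_closure (Or.inr ⟨a, ha, b, hb, rfl⟩)

lemma posLeft (𝒜 : ℕ → AddSubgroup T) [GradedRing 𝒜] (hsg : StronglyGraded 𝒜)
    (I : TwoSidedIdeal T) (n : ℕ) :
    ∀ a ∈ 𝒜 (n + 1), ∀ x ∈ I, a * x ∈ tildeI 𝒜 (I : Set T) := by
  intro a ha x hx
  cases n with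
  | zero => exact mem_tildeI_right 𝒜 _ ha hx
  | succ n =>
    have h := hsg (n + 1) ha
    have : a ∈ (tildeI 𝒜 (I : Set T)).comap (AddMonoidHom.mulRight x) := by
      refine (AddSubgroup.closure_le _).2 ?_ h
      rintro y ⟨c, hc, d, hd, rfl⟩
      show c * d * x ∈ tildeI 𝒜 (I : Set T)
      rw [mul_assoc]
      exact mem_tildeI_right 𝒜 _ hc (I.mul_mem_left _ _ hx)
    exact this

lemma posRight (𝒜 : ℕ → AddSubgroup T) [GradedRing 𝒜] (hsg : StronglyGraded 𝒜)
    (I : TwoSidedIdeal T) (n : ℕ) :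
    ∀ a ∈ 𝒜 (n + 1), ∀ x ∈ I, x * a ∈ tildeI 𝒜 (I : Set T) := by
  induction n with
  | zero => exact fun a ha x hx => mem_tildeI_left 𝒜 _ hx ha
  | succ n ih =>
    intro a ha x hx
    have h := hsg (n + 1) ha
    have : a ∈ (tildeI 𝒜 (I : Set T)).comap (AddMonoidHom.mulLeft x) := by
      refine (AddSubgroup.closure_le _).2 ?_ h
      rintro y ⟨c, hc, d, hd, rfl⟩
      show x * (c * d) ∈ tildeI 𝒜 (I : Set T)
      rw [← mul_assoc]
      exact ih d hd (x * c) (I.mul_mem_right _ _ hx)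
    exact this

noncomputable def posPart (𝒜 : ℕ → AddSubgroup T) : AddSubgroup T :=
  AddSubgroup.closure (⋃ n : ℕ, ((𝒜 (n + 1)) : Set T))

lemma sub_proj_mem_posPart (𝒜 : ℕ → AddSubgroup T) [GradedRing 𝒜] (t : T) :
    t - projFun 𝒜 0 t ∈ posPart 𝒜 := by
  induction t using DirectSum.Decomposition.inductionOn 𝒜 with
  | zero =>
    simp only [projFun, DirectSum.decompose_zero, DirectSum.zero_apply, AddSubgroup.coe_zero,
      sub_zero]
    exact zero_mem _
  | homogeneous m =>
    rename_i i
    cases i with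
    | zero =>
      have : projFun 𝒜 0 (m : T) = (m : T) := DirectSum.decompose_of_mem_same 𝒜 m.2
      rw [this, sub_self]
      exact zero_mem _
    | succ n =>
      have : projFun 𝒜 0 (m : T) = 0 :=
        DirectSum.decompose_of_mem_ne 𝒜 m.2 (Nat.succ_ne_zero n)
      rw [this, sub_zero]
      exact AddSubgroup.subset_closure (Set.mem_iUnion.2 ⟨n, m.2⟩)
  | add a b ha hb =>
    have : a + b - projFun 𝒜 0 (a + b) = (a - projFun 𝒜 0 a) + (b - projFun 𝒜 0 b) := by
      unfold projFun
      rw [DirectSum.decompose_add, DirectSum.add_apply, AddSubgroup.coe_add]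
      abel
    rw [this]
    exact add_mem ha hb

lemma posPart_mul (𝒜 : ℕ → AddSubgroup T) [GradedRing 𝒜] (hsg : StronglyGraded 𝒜)
    (I : TwoSidedIdeal T) {p : T} (hp : p ∈ posPart 𝒜) {x : T} (hx : x ∈ I) :
    p * x ∈ tildeI 𝒜 (I : Set T) ∧ x * p ∈ tildeI 𝒜 (I : Set T) := by
  constructor
  · have : p ∈ (tildeI 𝒜 (I : Set T)).comap (AddMonoidHom.mulRight x) := by
      refine (AddSubgroup.closure_le _).2 ?_ hp
      intro y hy
      obtain ⟨n, hn⟩ := Set.mem_iUnion.1 hy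
      exact posLeft 𝒜 hsg I n y hn x hx
    exact this
  · have : p ∈ (tildeI 𝒜 (I : Set T)).comap (AddMonoidHom.mulLeft x) := by
      refine (AddSubgroup.closure_le _).2 ?_ hp
      intro y hy
      obtain ⟨n, hn⟩ := Set.mem_iUnion.1 hy
      exact posRight 𝒜 hsg I n y hn x hx
    exact this

lemma deg0_mul_tildeI (𝒜 : ℕ → AddSubgroup T) [GradedRing 𝒜]
    (I : TwoSidedIdeal T) {s : T} (hs : s ∈ 𝒜 0) {y : T} (hy : y ∈ tildeI 𝒜 (I : Set T)) :
    s * y ∈ tildeI 𝒜 (I : Set T) ∧ y * s ∈ tildeI 𝒜 (I : Set T) := by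
  constructor
  · have : y ∈ (tildeI 𝒜 (I : Set T)).comap (AddMonoidHom.mulLeft s) := by
      refine (AddSubgroup.closure_le _).2 ?_ hy
      rintro z (⟨a, ha, b, hb, rfl⟩ | ⟨a, ha, b, hb, rfl⟩)
      · show s * (a * b) ∈ tildeI 𝒜 (I : Set T)
        rw [← mul_assoc]
        exact mem_tildeI_left 𝒜 _ (I.mul_mem_left _ _ ha) hb
      · show s * (a * b) ∈ tildeI 𝒜 (I : Set T)
        rw [← mul_assoc]
        exact mem_tildeI_right 𝒜 _ (by simpa using SetLike.mul_mem_graded hs ha) hb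
    exact this
  · have : y ∈ (tildeI 𝒜 (I : Set T)).comap (AddMonoidHom.mulRight s) := by
      refine (AddSubgroup.closure_le _).2 ?_ hy
      rintro z (⟨a, ha, b, hb, rfl⟩ | ⟨a, ha, b, hb, rfl⟩)
      · show a * b * s ∈ tildeI 𝒜 (I : Set T)
        rw [mul_assoc]
        exact mem_tildeI_left 𝒜 _ ha (by simpa using SetLike.mul_mem_graded hb hs)
      · show a * b * s ∈ tildeI 𝒜 (I : Set T)
        rw [mul_assoc]
        exact mem_tildeI_right 𝒜 _ ha (I.mul_mem_right _ _ hb)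
    exact this

lemma tildeI_le (𝒜 : ℕ → AddSubgroup T) (I : TwoSidedIdeal T) :
    ∀ x ∈ tildeI 𝒜 (I : Set T), x ∈ I := by
  intro x hx
  induction hx using AddSubgroup.closure_induction with
  | mem z hz =>
    rcases hz with ⟨a, ha, b, _, rfl⟩ | ⟨a, _, b, hb, rfl⟩
    · exact I.mul_mem_right _ _ ha
    · exact I.mul_mem_left _ _ hb
  | zero => exact I.zero_mem
  | add a b _ _ ha hb => exact I.add_mem ha hb
  | neg a _ ha => exact I.neg_mem ha

/-- Proposition 2.12 (2). -/
theorem stmt_11 (𝒜 : ℕ → AddSubgroup T) [GradedRing 𝒜] (hsg : StronglyGraded 𝒜)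
    (I : TwoSidedIdeal T) (hIgr : ∀ x ∈ I, ∀ n, projFun 𝒜 n x ∈ I)
    (Rt : AddSubgroup T) (hRtbi : IsSubbimodule 𝒜 Rt)
    (hRtgr : ∀ x ∈ Rt, ∀ n, projFun 𝒜 n x ∈ Rt)
    (hRtI : (Rt : Set T) ⊆ (I : Set T))
    (hgen : TwoSidedIdeal.span (Rt : Set T) = I)
    (R : AddSubgroup T) (hRbi : IsSubbimodule 𝒜 R)
    (hRgr : ∀ x ∈ R, ∀ n, projFun 𝒜 n x ∈ R)
    (hcompl1 : R ⊓ (Rt ⊓ tildeI 𝒜 (I : Set T)) = ⊥)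
    (hcompl2 : R ⊔ (Rt ⊓ tildeI 𝒜 (I : Set T)) = Rt) :
    R ⊓ tildeI 𝒜 (I : Set T) = ⊥ ∧
      ((R ⊔ tildeI 𝒜 (I : Set T) : AddSubgroup T) : Set T) = (I : Set T) := by
  have hRle : R ≤ Rt := hcompl2 ▸ le_sup_left
  constructor
  · rw [eq_bot_iff]
    intro x hx
    rw [← hcompl1]
    exact ⟨hx.1, hRle hx.1, hx.2⟩
  · set J : AddSubgroup T := Rt ⊔ tildeI 𝒜 (I : Set T) with hJ
    -- J absorbs multiplication by degree-0 elements
    have hJ0 : ∀ s ∈ 𝒜 0, ∀ y ∈ J, s * y ∈ J ∧ y * s ∈ J := by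
      intro s hs y hy
      obtain ⟨u, hu, v, hv, rfl⟩ := AddSubgroup.mem_sup.1 hy
      constructor
      · rw [mul_add]
        exact add_mem (le_sup_left (a := Rt) ((hRtbi s hs u hu).1))
          (le_sup_right (b := tildeI 𝒜 (I : Set T)) (deg0_mul_tildeI 𝒜 I hs hv).1)
      · rw [add_mul]
        exact add_mem (le_sup_left (a := Rt) ((hRtbi s hs u hu).2))
          (le_sup_right (b := tildeI 𝒜 (I : Set T)) (deg0_mul_tildeI 𝒜 I hs hv).2)
    -- the two-sided ideal I ∩ J
    have key : ∀ x ∈ I, x ∈ J := by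
      have hsub : (Rt : Set T) ⊆ {x : T | x ∈ I ∧ x ∈ J} := fun x hx =>
        ⟨hRtI hx, le_sup_left (b := tildeI 𝒜 (I : Set T)) hx⟩
      have hmull : ∀ {x y : T}, y ∈ {x : T | x ∈ I ∧ x ∈ J} → x * y ∈ {x : T | x ∈ I ∧ x ∈ J} := by
        intro x y hy
        refine ⟨I.mul_mem_left _ _ hy.1, ?_⟩
        have hdec : x * y = projFun 𝒜 0 x * y + (x - projFun 𝒜 0 x) * y := by rw [sub_mul]; abel
        rw [hdec]
        refine add_mem ((hJ0 _ (SetLike.coe_mem _) y hy.2).1) ?_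
        exact le_sup_right (a := Rt)
          ((posPart_mul 𝒜 hsg I (sub_proj_mem_posPart 𝒜 x) hy.1).1)
      have hmulr : ∀ {x y : T}, x ∈ {x : T | x ∈ I ∧ x ∈ J} → x * y ∈ {x : T | x ∈ I ∧ x ∈ J} := by
        intro x y hx
        refine ⟨I.mul_mem_right _ _ hx.1, ?_⟩
        have hdec : x * y = x * projFun 𝒜 0 y + x * (y - projFun 𝒜 0 y) := by rw [mul_sub]; abel
        rw [hdec]
        refine add_mem ((hJ0 _ (SetLike.coe_mem _) x hx.2).2) ?_
        exact le_sup_right (a := Rt)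
          ((posPart_mul 𝒜 hsg I (sub_proj_mem_posPart 𝒜 y) hx.1).2)
      have hK : ∀ x ∈ TwoSidedIdeal.span (Rt : Set T), x ∈ I ∧ x ∈ J := by
        intro x hx
        have := TwoSidedIdeal.mem_span_iff.1 hx
          (TwoSidedIdeal.mk' {x : T | x ∈ I ∧ x ∈ J}
            ⟨I.zero_mem, zero_mem J⟩
            (fun ha hb => ⟨I.add_mem ha.1 hb.1, add_mem ha.2 hb.2⟩)
            (fun ha => ⟨I.neg_mem ha.1, neg_mem ha.2⟩)
            hmull hmulr)
          (fun z hz => by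
            rw [SetLike.mem_coe, TwoSidedIdeal.mem_mk']
            exact hsub hz)
        rwa [TwoSidedIdeal.mem_mk'] at this
      intro x hx
      exact (hK x (hgen ▸ hx)).2
    apply Set.Subset.antisymm
    · intro x hx
      obtain ⟨u, hu, v, hv, rfl⟩ := AddSubgroup.mem_sup.1 hx
      exact I.add_mem (hRtI (hRle hu)) (tildeI_le 𝒜 I v hv)
    · intro x hx
      have hxJ := key x hx
      obtain ⟨u, hu, v, hv, rfl⟩ := AddSubgroup.mem_sup.1 hxJ
      -- u ∈ Rt = R ⊔ (Rt ⊓ tildeI)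
      rw [← hcompl2] at hu
      obtain ⟨r, hr, w, hw, rfl⟩ := AddSubgroup.mem_sup.1 hu
      rw [add_assoc]
      exact AddSubgroup.mem_sup.2 ⟨r, hr, w + v, add_mem hw.2 hv, rfl⟩
end

section
/- Let R be a pure graded S-subbimodule (i.e. R = R^n for some n) which generates the graded ideal I of a strongly graded connected S-ring T. Then R is a bimodule of relations for T/I, i.e. R ⊕ (I T^1 + T^1 I) = I. -/
variable {T : Type*} [Ring T]

section MyAux

variable (𝒜 : ℕ → AddSubgroup T) [GradedRing 𝒜]

lemma my_projFun_mul_eq_zero {jx jy : ℕ} {x y : T}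
    (hx : ∀ i, i < jx → projFun 𝒜 i x = 0) (hy : ∀ j, j < jy → projFun 𝒜 j y = 0)
    {m : ℕ} (hm : m < jx + jy) : projFun 𝒜 m (x * y) = 0 := by
  classical
  unfold projFun at *
  rw [DirectSum.decompose_mul, DirectSum.coe_mul_apply]
  apply Finset.sum_eq_zero
  rintro ⟨i, j⟩ hij
  simp only [Finset.mem_filter, Finset.mem_product, DFinsupp.mem_support_iff] at hij
  obtain ⟨⟨hi, hj⟩, hsum⟩ := hij
  exfalso
  rcases lt_or_ge i jx with h | h
  · exact hi (ZeroMemClass.coe_eq_zero.mp (hx i h))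
  rcases lt_or_ge j jy with h' | h'
  · exact hj (ZeroMemClass.coe_eq_zero.mp (hy j h'))
  omega

lemma my_projFun_zero (m : ℕ) : projFun 𝒜 m (0 : T) = 0 := by
  unfold projFun
  rw [DirectSum.decompose_zero, DirectSum.zero_apply, AddSubgroup.coe_zero]

lemma my_mem_tildeI_left {I : Set T} {a b : T} (ha : a ∈ I) (hb : b ∈ 𝒜 1) :
    a * b ∈ tildeI 𝒜 I :=
  AddSubgroup.subset_closure (Or.inl ⟨a, ha, b, hb, rfl⟩)

lemma my_mem_tildeI_right {I : Set T} {a b : T} (ha : a ∈ 𝒜 1) (hb : b ∈ I) :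
    a * b ∈ tildeI 𝒜 I :=
  AddSubgroup.subset_closure (Or.inr ⟨a, ha, b, hb, rfl⟩)

variable (I : TwoSidedIdeal T)

/-- Lemma F: an element of degree `q+1` times an element of `I` lies in `Ĩ`. -/
lemma my_lemF (hsg : StronglyGraded 𝒜) {q : ℕ} {x b : T} (hx : x ∈ 𝒜 (q + 1)) (hb : b ∈ I) :
    x * b ∈ tildeI 𝒜 (I : Set T) := by
  refine AddSubgroup.closure_induction (p := fun z _ => z * b ∈ tildeI 𝒜 (I : Set T))
    ?_ ?_ ?_ ?_ (hsg q hx)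
  · rintro z ⟨c, hc, d, hd, rfl⟩
    rw [mul_assoc]
    exact my_mem_tildeI_right 𝒜 hc (I.mul_mem_left d b hb)
  · show (0 : T) * _ ∈ _
    rw [zero_mul]; exact zero_mem _
  · intro u v _ _ hu hv
    show (u + v) * _ ∈ _
    rw [add_mul]; exact add_mem hu hv
  · intro u _ hu
    show (-u) * _ ∈ _
    rw [neg_mul]; exact neg_mem hu

/-- Lemma D: `a * c * d ∈ Ĩ` for `a ∈ I`, `c ∈ T^1`, `d ∈ T^q`. -/
lemma my_lemD (hsg : StronglyGraded 𝒜) : ∀ q : ℕ, ∀ a ∈ I, ∀ c ∈ 𝒜 1, ∀ d ∈ 𝒜 q,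
    a * c * d ∈ tildeI 𝒜 (I : Set T) := by
  intro q
  induction q with
  | zero =>
    intro a ha c hc d hd
    rw [mul_assoc]
    exact my_mem_tildeI_left 𝒜 ha (SetLike.mul_mem_graded hc hd)
  | succ q ih =>
    intro a ha c hc d hd
    refine AddSubgroup.closure_induction (p := fun z _ => a * c * z ∈ tildeI 𝒜 (I : Set T))
      ?_ ?_ ?_ ?_ (hsg q hd)
    · rintro z ⟨e, he, f, hf, rfl⟩
      rw [← mul_assoc]
      exact ih (a * c) (I.mul_mem_right a c ha) e he f hf
    · show _ * (0 : T) ∈ _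
      rw [mul_zero]; exact zero_mem _
    · intro u v _ _ hu hv
      show _ * (u + v) ∈ _
      rw [mul_add]; exact add_mem hu hv
    · intro u _ hu
      show _ * (-u) ∈ _
      rw [mul_neg]; exact neg_mem hu

/-- Lemma G: `Ĩ` is stable under left multiplication by `T`. -/
lemma my_lemG (hsg : StronglyGraded 𝒜) (t : T) {w : T} (hw : w ∈ tildeI 𝒜 (I : Set T)) :
    t * w ∈ tildeI 𝒜 (I : Set T) := by
  classical
  refine AddSubgroup.closure_induction (p := fun z _ => t * z ∈ tildeI 𝒜 (I : Set T))
    ?_ ?_ ?_ ?_ hw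
  · rintro z (⟨a, ha, b, hb, rfl⟩ | ⟨a, ha, b, hb, rfl⟩)
    · rw [← mul_assoc]
      exact my_mem_tildeI_left 𝒜 (I.mul_mem_left t a ha) hb
    · rw [← mul_assoc, ← DirectSum.sum_support_decompose 𝒜 t, Finset.sum_mul, Finset.sum_mul]
      refine AddSubgroup.sum_mem _ fun p _ => ?_
      exact my_lemF 𝒜 I hsg (q := p)
        (SetLike.mul_mem_graded (SetLike.coe_mem _) ha) hb
  · show _ * (0 : T) ∈ _
    rw [mul_zero]; exact zero_mem _
  · intro u v _ _ hu hv
    show _ * (u + v) ∈ _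
    rw [mul_add]; exact add_mem hu hv
  · intro u _ hu
    show _ * (-u) ∈ _
    rw [mul_neg]; exact neg_mem hu

/-- Lemma H: `Ĩ` is stable under right multiplication by `T`. -/
lemma my_lemH (hsg : StronglyGraded 𝒜) (t : T) {w : T} (hw : w ∈ tildeI 𝒜 (I : Set T)) :
    w * t ∈ tildeI 𝒜 (I : Set T) := by
  classical
  refine AddSubgroup.closure_induction (p := fun z _ => z * t ∈ tildeI 𝒜 (I : Set T))
    ?_ ?_ ?_ ?_ hw
  · rintro z (⟨a, ha, b, hb, rfl⟩ | ⟨a, ha, b, hb, rfl⟩)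
    · rw [← DirectSum.sum_support_decompose 𝒜 t, Finset.mul_sum]
      refine AddSubgroup.sum_mem _ fun q _ => ?_
      exact my_lemD 𝒜 I hsg q a ha b hb _ (SetLike.coe_mem _)
    · rw [mul_assoc]
      exact my_mem_tildeI_right 𝒜 ha (I.mul_mem_right b t hb)
  · show (0 : T) * _ ∈ _
    rw [zero_mul]; exact zero_mem _
  · intro u v _ _ hu hv
    show (u + v) * _ ∈ _
    rw [add_mul]; exact add_mem hu hv
  · intro u _ hu
    show (-u) * _ ∈ _
    rw [neg_mul]; exact neg_mem hu

end MyAux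

/-- Corollary 2.14: a pure generating bimodule is a bimodule of relations. -/
theorem stmt_12 (𝒜 : ℕ → AddSubgroup T) [GradedRing 𝒜] (hsg : StronglyGraded 𝒜)
    (n : ℕ) (R : AddSubgroup T) (hRbi : IsSubbimodule 𝒜 R)
    (hpure : (R : Set T) ⊆ (𝒜 n : Set T))
    (I : TwoSidedIdeal T) (hgen : TwoSidedIdeal.span (R : Set T) = I) :
    R ⊓ tildeI 𝒜 (I : Set T) = ⊥ ∧
      ((R ⊔ tildeI 𝒜 (I : Set T) : AddSubgroup T) : Set T) = (I : Set T) := by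
  classical
  have hRI : ∀ r ∈ R, r ∈ I := by
    intro r hr
    rw [← hgen]
    exact TwoSidedIdeal.subset_span hr
  have hRlow : ∀ r ∈ R, ∀ m, m < n → projFun 𝒜 m r = 0 := fun r hr m hm =>
    DirectSum.decompose_of_mem_ne 𝒜 (hpure hr) (by omega)
  have hIlow : ∀ x ∈ (I : Set T), ∀ m, m < n → projFun 𝒜 m x = 0 := by
    intro x hx
    have hx' : x ∈ TwoSidedIdeal.span (R : Set T) := by rw [hgen]; exact hx
    have hmem := TwoSidedIdeal.mem_span_iff.mp hx'
      (TwoSidedIdeal.mk' {z : T | ∀ m, m < n → projFun 𝒜 m z = 0}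
        (fun m hm => my_projFun_zero 𝒜 m)
        (fun {a b} ha hb m hm => by rw [projFun_add, ha m hm, hb m hm, add_zero])
        (fun {a} ha m hm => by rw [projFun_neg, ha m hm, neg_zero])
        (fun {t z} hz m hm => my_projFun_mul_eq_zero 𝒜 (jx := 0)
          (fun i hi => absurd hi (Nat.not_lt_zero i)) hz (by omega))
        (fun {z t} hz m hm => my_projFun_mul_eq_zero 𝒜 (jy := 0) hz
          (fun i hi => absurd hi (Nat.not_lt_zero i)) (by omega)))
      (fun r hr => by
        rw [SetLike.mem_coe, TwoSidedIdeal.mem_mk']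
        exact hRlow r hr)
    rwa [TwoSidedIdeal.mem_mk'] at hmem
  have hb1low : ∀ b ∈ 𝒜 1, ∀ j, j < 1 → projFun 𝒜 j b = 0 := by
    intro b hb j hj
    exact DirectSum.decompose_of_mem_ne 𝒜 hb (by omega)
  have hTlow : ∀ w ∈ tildeI 𝒜 (I : Set T), ∀ m, m < n + 1 → projFun 𝒜 m w = 0 := by
    intro w hw
    refine AddSubgroup.closure_induction
      (p := fun z _ => ∀ m, m < n + 1 → projFun 𝒜 m z = 0) ?_ ?_ ?_ ?_ hw
    · rintro z (⟨a, ha, b, hb, rfl⟩ | ⟨a, ha, b, hb, rfl⟩) m hm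
      · exact my_projFun_mul_eq_zero 𝒜 (hIlow a ha) (hb1low b hb) (by omega)
      · exact my_projFun_mul_eq_zero 𝒜 (hb1low a ha) (hIlow b hb) (by omega)
    · intro m hm
      exact my_projFun_zero 𝒜 m
    · intro u v _ _ hu hv m hm
      rw [projFun_add, hu m hm, hv m hm, add_zero]
    · intro u _ hu m hm
      rw [projFun_neg, hu m hm, neg_zero]
  have htI_sub : ∀ w ∈ tildeI 𝒜 (I : Set T), w ∈ I := by
    intro w hw
    refine AddSubgroup.closure_induction (p := fun z _ => z ∈ I) ?_ (I.zero_mem)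
      (fun u v _ _ hu hv => I.add_mem hu hv) (fun u _ hu => I.neg_mem hu) hw
    rintro z (⟨a, ha, b, hb, rfl⟩ | ⟨a, ha, b, hb, rfl⟩)
    · exact I.mul_mem_right a b ha
    · exact I.mul_mem_left a b hb
  constructor
  · rw [eq_bot_iff]
    intro x hx
    obtain ⟨hxR, hxT⟩ := AddSubgroup.mem_inf.mp hx
    rw [AddSubgroup.mem_bot]
    have h1 : projFun 𝒜 n x = 0 := hTlow x hxT n (Nat.lt_succ_self n)
    have h2 : projFun 𝒜 n x = x := by
      unfold projFun
      exact DirectSum.decompose_of_mem_same 𝒜 (hpure hxR)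
    rw [← h2, h1]
  · apply Set.Subset.antisymm
    · intro x hx
      rw [SetLike.mem_coe] at hx
      obtain ⟨r, hr, w, hw, rfl⟩ := AddSubgroup.mem_sup.mp hx
      exact I.add_mem (hRI r hr) (htI_sub w hw)
    · intro x hx
      have hx' : x ∈ TwoSidedIdeal.span (R : Set T) := by rw [hgen]; exact hx
      have hmem := TwoSidedIdeal.mem_span_iff.mp hx'
        (TwoSidedIdeal.mk' (↑(R ⊔ tildeI 𝒜 (I : Set T)))
          (zero_mem _)
          (fun {a b} ha hb => add_mem ha hb)
          (fun {a} ha => neg_mem ha)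
          (fun {t v} hv => by
            rw [SetLike.mem_coe] at hv ⊢
            obtain ⟨r, hr, w, hw, rfl⟩ := AddSubgroup.mem_sup.mp hv
            rw [mul_add]
            refine add_mem ?_ (AddSubgroup.mem_sup_right (my_lemG 𝒜 I hsg t hw))
            rw [← DirectSum.sum_support_decompose 𝒜 t, Finset.sum_mul]
            refine AddSubgroup.sum_mem _ ?_
            rintro (_ | q) _
            · exact AddSubgroup.mem_sup_left ((hRbi _ (SetLike.coe_mem _) r hr).1)
            · exact AddSubgroup.mem_sup_right
                (my_lemF 𝒜 I hsg (SetLike.coe_mem _) (hRI r hr)))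
          (fun {v t} hv => by
            rw [SetLike.mem_coe] at hv ⊢
            obtain ⟨r, hr, w, hw, rfl⟩ := AddSubgroup.mem_sup.mp hv
            rw [add_mul]
            refine add_mem ?_ (AddSubgroup.mem_sup_right (my_lemH 𝒜 I hsg t hw))
            rw [← DirectSum.sum_support_decompose 𝒜 t, Finset.mul_sum]
            refine AddSubgroup.sum_mem _ ?_
            rintro (_ | q) _
            · exact AddSubgroup.mem_sup_left ((hRbi _ (SetLike.coe_mem _) r hr).2)
            · refine AddSubgroup.mem_sup_right ?_
              refine AddSubgroup.closure_induction
                (p := fun z _ => r * z ∈ tildeI 𝒜 (I : Set T)) ?_ ?_ ?_ ?_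
                (hsg q (SetLike.coe_mem _))
              · rintro z ⟨c, hc, d, hd, rfl⟩
                rw [← mul_assoc]
                exact my_lemD 𝒜 I hsg q r (hRI r hr) c hc d hd
              · show _ * (0 : T) ∈ _
                rw [mul_zero]; exact zero_mem _
              · intro u v _ _ hu hv
                show _ * (u + v) ∈ _
                rw [mul_add]; exact add_mem hu hv
              · intro u _ hu
                show _ * (-u) ∈ _
                rw [mul_neg]; exact neg_mem hu))
        (fun r hr => by
          rw [SetLike.mem_coe, TwoSidedIdeal.mem_mk']
          exact AddSubgroup.mem_sup_left hr)
      rwa [TwoSidedIdeal.mem_mk'] at hmem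
end

section
/- Let T be a connected strongly graded S-ring and P an S-subbimodule. Define P_0 := P ∩ T^0 and P_{n+1} := T^1 P_n + P_n T^1 + P^{≤n+1}. Then P_n = Σ_{i+j+k=n} T^{≤i} · P^{≤j} · T^{≤k} for all n, i.e. the recursively defined sequence coincides with the canonical filtration of the ideal ⟨P⟩. -/
variable {T : Type*} [Ring T]

/-- The subgroup generated by products `a * b` with `a ∈ A`, `b ∈ B`. -/
noncomputable def mulAdd (A B : AddSubgroup T) : AddSubgroup T :=
  AddSubgroup.closure {y : T | ∃ a ∈ A, ∃ b ∈ B, y = a * b}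

/-- The canonical filtration `P_n = Σ_{i+j+k=n} T^{≤i} P^{≤j} T^{≤k}` of the ideal `⟨P⟩`. -/
noncomputable def Pcan (𝒜 : ℕ → AddSubgroup T) [GradedRing 𝒜] (P : AddSubgroup T) (n : ℕ) :
    AddSubgroup T :=
  AddSubgroup.closure {x : T | ∃ i j k : ℕ, i + j + k = n ∧
    ∃ a ∈ degLE 𝒜 i, ∃ b ∈ P ⊓ degLE 𝒜 j, ∃ c ∈ degLE 𝒜 k, x = a * b * c}

/-- The recursively defined filtration `P_0 = P ∩ T^0`,
`P_{n+1} = T^1 P_n + P_n T^1 + P^{≤ n+1}`. -/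
noncomputable def Prec (𝒜 : ℕ → AddSubgroup T) [GradedRing 𝒜] (P : AddSubgroup T) :
    ℕ → AddSubgroup T
  | 0 => P ⊓ 𝒜 0
  | n + 1 => mulAdd (𝒜 1) (Prec 𝒜 P n) ⊔ mulAdd (Prec 𝒜 P n) (𝒜 1) ⊔ (P ⊓ degLE 𝒜 (n + 1))


section Aux

variable (𝒜 : ℕ → AddSubgroup T) [GradedRing 𝒜]

lemma mem_degLE_of_mem {p n : ℕ} (hpn : p ≤ n) {y : T} (hy : y ∈ 𝒜 p) :
    y ∈ degLE 𝒜 n := by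
  intro m hm
  unfold projFun
  rw [DirectSum.decompose_of_mem_ne 𝒜 hy (by omega : p ≠ m)]

lemma degLE_induction {n : ℕ} {x : T} (hx : x ∈ degLE 𝒜 n) (S : AddSubgroup T)
    (hS : ∀ p ≤ n, ∀ y ∈ 𝒜 p, y ∈ S) : x ∈ S := by
  classical
  rw [← DirectSum.sum_support_decompose 𝒜 x]
  refine AddSubgroup.sum_mem S ?_
  intro p _
  by_cases hp : p ≤ n
  · exact hS p hp _ (SetLike.coe_mem _)
  · have h0 : projFun 𝒜 p x = 0 := hx p (by omega)
    unfold projFun at h0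
    rw [h0]
    exact S.zero_mem

lemma degLE_mul {m n : ℕ} {x y : T} (hx : x ∈ degLE 𝒜 m) (hy : y ∈ degLE 𝒜 n) :
    x * y ∈ degLE 𝒜 (m + n) := by
  have := degLE_induction 𝒜 hx ((degLE 𝒜 (m + n)).comap (AddMonoidHom.mulRight y)) ?_
  · exact this
  intro p hp a ha
  have := degLE_induction 𝒜 hy ((degLE 𝒜 (m + n)).comap (AddMonoidHom.mulLeft a)) ?_
  · exact this
  intro q hq b hb
  show a * b ∈ degLE 𝒜 (m + n)
  exact mem_degLE_of_mem 𝒜 (by omega) (SetLike.mul_mem_graded (A := 𝒜) ha hb)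

lemma closure_mul_left {s : Set T} {x c : T} (hx : x ∈ AddSubgroup.closure s)
    (S : AddSubgroup T) (h : ∀ y ∈ s, c * y ∈ S) : c * x ∈ S := by
  have hle : AddSubgroup.closure s ≤ S.comap (AddMonoidHom.mulLeft c) :=
    AddSubgroup.closure_le _ |>.mpr h
  exact hle hx

lemma closure_mul_right {s : Set T} {x c : T} (hx : x ∈ AddSubgroup.closure s)
    (S : AddSubgroup T) (h : ∀ y ∈ s, y * c ∈ S) : x * c ∈ S := by
  have hle : AddSubgroup.closure s ≤ S.comap (AddMonoidHom.mulRight c) :=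
    AddSubgroup.closure_le _ |>.mpr h
  exact hle hx

lemma mulAdd_le {A B S : AddSubgroup T} (h : ∀ a ∈ A, ∀ b ∈ B, a * b ∈ S) :
    mulAdd A B ≤ S := by
  refine AddSubgroup.closure_le _ |>.mpr ?_
  rintro y ⟨a, ha, b, hb, rfl⟩
  exact h a ha b hb

lemma mem_mulAdd {A B : AddSubgroup T} {a b : T} (ha : a ∈ A) (hb : b ∈ B) :
    a * b ∈ mulAdd A B :=
  AddSubgroup.subset_closure ⟨a, ha, b, hb, rfl⟩

variable (P : AddSubgroup T)

lemma Prec_zero : Prec 𝒜 P 0 = P ⊓ 𝒜 0 := rfl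

lemma Prec_succ (n : ℕ) :
    Prec 𝒜 P (n + 1) =
      mulAdd (𝒜 1) (Prec 𝒜 P n) ⊔ mulAdd (Prec 𝒜 P n) (𝒜 1) ⊔ (P ⊓ degLE 𝒜 (n + 1)) :=
  rfl

variable {P}

lemma Prec_mul_A1 {m : ℕ} {x a : T} (hx : x ∈ Prec 𝒜 P m) (ha : a ∈ 𝒜 1) :
    x * a ∈ Prec 𝒜 P (m + 1) := by
  rw [Prec_succ]
  exact AddSubgroup.mem_sup_left (AddSubgroup.mem_sup_right (mem_mulAdd hx ha))

lemma A1_mul_Prec {m : ℕ} {x a : T} (hx : x ∈ Prec 𝒜 P m) (ha : a ∈ 𝒜 1) :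
    a * x ∈ Prec 𝒜 P (m + 1) := by
  rw [Prec_succ]
  exact AddSubgroup.mem_sup_left (AddSubgroup.mem_sup_left (mem_mulAdd ha hx))

lemma Prec_mul_A0 (hP : IsSubbimodule 𝒜 P) :
    ∀ m, ∀ x ∈ Prec 𝒜 P m, ∀ c ∈ 𝒜 0, x * c ∈ Prec 𝒜 P m := by
  intro m
  induction m with
  | zero =>
    intro x hx c hc
    rw [Prec_zero] at hx ⊢
    obtain ⟨hxP, hx0⟩ := hx
    refine ⟨(hP c hc x hxP).2, ?_⟩
    simpa using SetLike.mul_mem_graded (A := 𝒜) hx0 hc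
  | succ n ih =>
    intro x hx c hc
    have key : Prec 𝒜 P (n + 1) ≤ (Prec 𝒜 P (n + 1)).comap (AddMonoidHom.mulRight c) := by
      nth_rewrite 1 [Prec_succ]
      refine sup_le (sup_le ?_ ?_) ?_
      · refine mulAdd_le ?_
        intro a ha y hy
        show a * y * c ∈ Prec 𝒜 P (n + 1)
        rw [mul_assoc]
        exact A1_mul_Prec 𝒜 (ih y hy c hc) ha
      · refine mulAdd_le ?_
        intro y hy a ha
        show y * a * c ∈ Prec 𝒜 P (n + 1)
        rw [mul_assoc]
        exact Prec_mul_A1 𝒜 hy (by simpa using SetLike.mul_mem_graded (A := 𝒜) ha hc)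
      · rintro b ⟨hbP, hbd⟩
        show b * c ∈ Prec 𝒜 P (n + 1)
        rw [Prec_succ]
        exact AddSubgroup.mem_sup_right ⟨(hP c hc b hbP).2,
          by simpa using degLE_mul 𝒜 hbd (mem_degLE_of_mem 𝒜 le_rfl hc)⟩
    exact key hx

lemma A0_mul_Prec (hP : IsSubbimodule 𝒜 P) :
    ∀ m, ∀ x ∈ Prec 𝒜 P m, ∀ c ∈ 𝒜 0, c * x ∈ Prec 𝒜 P m := by
  intro m
  induction m with
  | zero =>
    intro x hx c hc
    rw [Prec_zero] at hx ⊢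
    obtain ⟨hxP, hx0⟩ := hx
    refine ⟨(hP c hc x hxP).1, ?_⟩
    simpa using SetLike.mul_mem_graded (A := 𝒜) hc hx0
  | succ n ih =>
    intro x hx c hc
    have key : Prec 𝒜 P (n + 1) ≤ (Prec 𝒜 P (n + 1)).comap (AddMonoidHom.mulLeft c) := by
      nth_rewrite 1 [Prec_succ]
      refine sup_le (sup_le ?_ ?_) ?_
      · refine mulAdd_le ?_
        intro a ha y hy
        show c * (a * y) ∈ Prec 𝒜 P (n + 1)
        rw [← mul_assoc]
        exact A1_mul_Prec 𝒜 hy (by simpa using SetLike.mul_mem_graded (A := 𝒜) hc ha)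
      · refine mulAdd_le ?_
        intro y hy a ha
        show c * (y * a) ∈ Prec 𝒜 P (n + 1)
        rw [← mul_assoc]
        exact Prec_mul_A1 𝒜 (ih y hy c hc) ha
      · rintro b ⟨hbP, hbd⟩
        show c * b ∈ Prec 𝒜 P (n + 1)
        rw [Prec_succ]
        exact AddSubgroup.mem_sup_right ⟨(hP c hc b hbP).1,
          by simpa using degLE_mul 𝒜 (mem_degLE_of_mem 𝒜 (Nat.zero_le 0) hc) hbd⟩
    exact key hx

lemma Prec_mul_hom (hsg : StronglyGraded 𝒜) (hP : IsSubbimodule 𝒜 P) :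
    ∀ q m, ∀ x ∈ Prec 𝒜 P m, ∀ c ∈ 𝒜 q, x * c ∈ Prec 𝒜 P (m + q) := by
  intro q
  induction q with
  | zero => exact fun m x hx c hc => Prec_mul_A0 𝒜 hP m x hx c hc
  | succ q ih =>
    intro m x hx c hc
    have hc' := hsg q hc
    refine closure_mul_left hc' _ ?_
    rintro y ⟨a1, ha1, c', hc'', rfl⟩
    rw [← mul_assoc]
    have h1 : x * a1 ∈ Prec 𝒜 P (m + 1) := Prec_mul_A1 𝒜 hx ha1
    have := ih (m + 1) _ h1 c' hc''
    have heq : m + 1 + q = m + (q + 1) := by omega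
    rwa [heq] at this

lemma hom_mul_Prec (hsg : StronglyGraded 𝒜) (hP : IsSubbimodule 𝒜 P) :
    ∀ p m, ∀ a ∈ 𝒜 p, ∀ x ∈ Prec 𝒜 P m, a * x ∈ Prec 𝒜 P (p + m) := by
  intro p
  induction p with
  | zero => exact fun m a ha x hx => by simpa using A0_mul_Prec 𝒜 hP m x hx a ha
  | succ p ih =>
    intro m a ha x hx
    have ha' := hsg p ha
    refine closure_mul_right ha' _ ?_
    rintro y ⟨a1, ha1, a', ha'', rfl⟩
    rw [mul_assoc]
    have h1 : a' * x ∈ Prec 𝒜 P (p + m) := ih m a' ha'' x hx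
    have := A1_mul_Prec 𝒜 h1 ha1
    have heq : p + m + 1 = p + 1 + m := by omega
    rwa [heq] at this

lemma Prec_mono (hP : IsSubbimodule 𝒜 P) {m n : ℕ} (h : m ≤ n) :
    Prec 𝒜 P m ≤ Prec 𝒜 P n := by
  induction n with
  | zero => simpa [Nat.le_zero.mp h] using le_rfl
  | succ n ih =>
    rcases Nat.lt_or_ge m (n + 1) with h' | h'
    · refine (ih (by omega)).trans ?_
      clear ih h h' m
      induction n with
      | zero =>
        rw [Prec_succ]
        refine le_trans ?_ le_sup_right
        rintro x ⟨hxP, hx0⟩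
        exact ⟨hxP, mem_degLE_of_mem 𝒜 (by omega) hx0⟩
      | succ n ih =>
        rw [Prec_succ, Prec_succ]
        refine sup_le (sup_le ?_ ?_) ?_
        · exact le_trans (mulAdd_le fun a ha b hb => mem_mulAdd ha (ih hb))
            (le_sup_left.trans le_sup_left)
        · exact le_trans (mulAdd_le fun a ha b hb => mem_mulAdd (ih ha) hb)
            (le_sup_left.trans' le_sup_right)
        · refine le_trans ?_ le_sup_right
          rintro x ⟨hxP, hxd⟩
          exact ⟨hxP, fun k hk => hxd k (by omega)⟩
    · have : m = n + 1 := by omega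
      subst this
      exact le_rfl

lemma P_degLE_le_Prec (j : ℕ) : P ⊓ degLE 𝒜 j ≤ Prec 𝒜 P j := by
  cases j with
  | zero =>
    rintro x ⟨hxP, hxd⟩
    refine ⟨hxP, ?_⟩
    exact degLE_induction 𝒜 hxd (𝒜 0) (fun p hp y hy => by
      have : p = 0 := Nat.le_zero.mp hp
      subst this; exact hy)
  | succ n =>
    rw [Prec_succ]
    exact le_sup_right

end Aux

/-- Remark 2.9: for a strongly graded `T`, the recursion computes the canonical
filtration of `⟨P⟩`. -/
theorem stmt_13 (𝒜 : ℕ → AddSubgroup T) [GradedRing 𝒜] (hsg : StronglyGraded 𝒜)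
    (P : AddSubgroup T) (hP : IsSubbimodule 𝒜 P) :
    ∀ n, Prec 𝒜 P n = Pcan 𝒜 P n := by
  intro n
  induction n with
  | zero =>
    apply le_antisymm
    · intro x hx
      rw [Prec_zero] at hx
      obtain ⟨hxP, hx0⟩ := hx
      have hone : (1 : T) ∈ degLE 𝒜 0 :=
        mem_degLE_of_mem 𝒜 le_rfl (SetLike.one_mem_graded 𝒜)
      have hx1 : x = 1 * x * 1 := by rw [one_mul, mul_one]
      rw [hx1]
      exact AddSubgroup.subset_closure ⟨0, 0, 0, rfl, 1, hone, x,
        ⟨hxP, mem_degLE_of_mem 𝒜 le_rfl hx0⟩, 1, hone, rfl⟩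
    · refine AddSubgroup.closure_le _ |>.mpr ?_
      rintro x ⟨i, j, k, hijk, a, ha, b, ⟨hbP, hbd⟩, c, hc, rfl⟩
      obtain ⟨rfl, rfl, rfl⟩ : i = 0 ∧ j = 0 ∧ k = 0 := by omega
      have key : ∀ y : T, y ∈ degLE 𝒜 0 → y ∈ 𝒜 0 := fun y hy =>
        degLE_induction 𝒜 hy (𝒜 0) (fun p hp z hz => by
          obtain rfl : p = 0 := Nat.le_zero.mp hp
          exact hz)
      have ha0 := key a ha
      have hb0 := key b hbd
      have hc0 := key c hc
      rw [Prec_zero]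
      refine ⟨(hP c hc0 _ (hP a ha0 b hbP).1).2, ?_⟩
      simpa using SetLike.mul_mem_graded (A := 𝒜)
        (SetLike.mul_mem_graded (A := 𝒜) ha0 hb0) hc0
  | succ n ih =>
    apply le_antisymm
    · rw [Prec_succ]
      refine sup_le (sup_le ?_ ?_) ?_
      · refine mulAdd_le ?_
        intro a1 ha1 x hx
        rw [ih] at hx
        refine closure_mul_left hx _ ?_
        rintro y ⟨i, j, k, hijk, a, ha, b, hb, c, hc, rfl⟩
        have heq : a1 * (a * b * c) = (a1 * a) * b * c := by simp [mul_assoc]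
        rw [heq]
        have haa : a1 * a ∈ degLE 𝒜 (i + 1) := by
          have := degLE_mul 𝒜 (mem_degLE_of_mem 𝒜 le_rfl ha1) ha
          rwa [Nat.add_comm] at this
        exact AddSubgroup.subset_closure ⟨i + 1, j, k, by omega, a1 * a, haa, b, hb, c, hc, rfl⟩
      · refine mulAdd_le ?_
        intro x hx a1 ha1
        rw [ih] at hx
        refine closure_mul_right hx _ ?_
        rintro y ⟨i, j, k, hijk, a, ha, b, hb, c, hc, rfl⟩
        have heq : (a * b * c) * a1 = a * b * (c * a1) := by simp [mul_assoc]
        rw [heq]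
        have hcc : c * a1 ∈ degLE 𝒜 (k + 1) :=
          degLE_mul 𝒜 hc (mem_degLE_of_mem 𝒜 le_rfl ha1)
        exact AddSubgroup.subset_closure ⟨i, j, k + 1, by omega, a, ha, b, hb, c * a1, hcc, rfl⟩
      · intro x hx
        have hone : (1 : T) ∈ degLE 𝒜 0 :=
          mem_degLE_of_mem 𝒜 le_rfl (SetLike.one_mem_graded 𝒜)
        have hx1 : x = 1 * x * 1 := by rw [one_mul, mul_one]
        rw [hx1]
        exact AddSubgroup.subset_closure ⟨0, n + 1, 0, by omega, 1, hone, x, hx, 1, hone, rfl⟩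
    · refine AddSubgroup.closure_le _ |>.mpr ?_
      rintro x ⟨i, j, k, hijk, a, ha, b, hb, c, hc, rfl⟩
      have hbPrec : b ∈ Prec 𝒜 P j := P_degLE_le_Prec 𝒜 j hb
      have hbc : b * c ∈ Prec 𝒜 P (j + k) := by
        refine degLE_induction 𝒜 hc ((Prec 𝒜 P (j + k)).comap (AddMonoidHom.mulLeft b)) ?_
        intro q hq y hy
        show b * y ∈ Prec 𝒜 P (j + k)
        exact Prec_mono 𝒜 hP (by omega) (Prec_mul_hom 𝒜 hsg hP q j b hbPrec y hy)
      have habc : a * (b * c) ∈ Prec 𝒜 P (n + 1) := by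
        refine degLE_induction 𝒜 ha
          ((Prec 𝒜 P (n + 1)).comap (AddMonoidHom.mulRight (b * c))) ?_
        intro p hp y hy
        show y * (b * c) ∈ Prec 𝒜 P (n + 1)
        exact Prec_mono 𝒜 hP (by omega) (hom_mul_Prec 𝒜 hsg hP p (j + k) y hy (b * c) hbc)
      rwa [← mul_assoc] at habc
end
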